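/- Let g > 1 and a ≥ 0 be real numbers, set α = 2 + (1+a)/(g−1), and for integers k ≥ 1 define p_k = (B(k+a, 1+(g+a)/(g−1)) / B(1+a, 1+(g+a)/(g−1))) · (g+a)/(g−1+g(1+a)), where B is the Beta function. Then the sequence p_k is asymptotically a power law with exponent α: the quantity p_k · k^{α} converges, as k → ∞, to the positive constant Γ(1+(g+a)/(g−1)) / B(1+a, 1+(g+a)/(g−1)) · (g+a)/(g−1+g(1+a)). In particular, for a = 0 and g = c·s the exponent is α = 2 + 1/(c·s − 1). -/

import Mathlib

open Filter Real

open Filter Real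

lemma Gamma_prod (b : ℝ) (hb : 0 < b) (n : ℕ) :
    Real.Gamma (b + n) = Real.Gamma b * ∏ j ∈ Finset.range n, (b + j) := by
  induction n with
  | zero => simp
  | succ n ih =>
      have h2 : (0:ℝ) < b + n := by positivity
      have h1 : b + ((n:ℕ) + 1 : ℕ) = (b + n) + 1 := by push_cast; ring
      rw [h1, Real.Gamma_add_one h2.ne', ih, Finset.prod_range_succ]
      ring

lemma tendsto_gamma_ratio (b t : ℝ) (hb : 0 < b) (ht : 0 < t) :
    Tendsto (fun n : ℕ => (n : ℝ) ^ t * Real.Gamma (b + n + 1) / Real.Gamma (b + t + n + 1))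
      atTop (nhds 1) := by
  have hbt : (0:ℝ) < b + t := by linarith
  have hΓb := Real.Gamma_pos_of_pos hb
  have hΓbt := Real.Gamma_pos_of_pos hbt
  have h := ((Real.GammaSeq_tendsto_Gamma (b + t)).div (Real.GammaSeq_tendsto_Gamma b)
    hΓb.ne').mul_const (Real.Gamma b / Real.Gamma (b + t))
  have hlim : Real.Gamma (b + t) / Real.Gamma b * (Real.Gamma b / Real.Gamma (b + t)) = 1 := by
    field_simp
  rw [hlim] at h
  refine h.congr' ?_
  filter_upwards [Filter.eventually_gt_atTop 0] with n hn
  have hn' : (0:ℝ) < (n : ℝ) := by exact_mod_cast hn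
  have e1 : ∏ j ∈ Finset.range (n + 1), (b + (j:ℝ)) = Real.Gamma (b + n + 1) / Real.Gamma b := by
    have := Gamma_prod b hb (n + 1)
    push_cast at this ⊢
    rw [show b + ((n:ℝ) + 1) = b + n + 1 by ring] at this
    rw [this]; field_simp
  have e2 : ∏ j ∈ Finset.range (n + 1), (b + t + (j:ℝ)) =
      Real.Gamma (b + t + n + 1) / Real.Gamma (b + t) := by
    have := Gamma_prod (b + t) hbt (n + 1)
    push_cast at this ⊢
    rw [show b + t + ((n:ℝ) + 1) = b + t + n + 1 by ring] at this
    rw [this]; field_simp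
  have hΓbn : (0:ℝ) < Real.Gamma (b + n + 1) := Real.Gamma_pos_of_pos (by positivity)
  have hΓbtn : (0:ℝ) < Real.Gamma (b + t + n + 1) := Real.Gamma_pos_of_pos (by positivity)
  have hfac : (0:ℝ) < (Nat.factorial n : ℝ) := by exact_mod_cast n.factorial_pos
  simp only [Real.GammaSeq, Pi.div_apply, e1, e2]
  rw [Real.rpow_add hn']
  have hrb : (0:ℝ) < (n:ℝ) ^ b := Real.rpow_pos_of_pos hn' b
  have hrt : (0:ℝ) < (n:ℝ) ^ t := Real.rpow_pos_of_pos hn' t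
  field_simp

lemma tendsto_gamma_ratio' (c t : ℝ) (hc : 0 ≤ c) (ht : 0 < t) :
    Tendsto (fun k : ℕ => Real.Gamma ((k : ℝ) + c) * (k : ℝ) ^ t / Real.Gamma ((k : ℝ) + c + t))
      atTop (nhds 1) := by
  rw [← Filter.tendsto_add_atTop_iff_nat 2]
  have hb : (0:ℝ) < 1 + c := by linarith
  have h1 := tendsto_gamma_ratio (1 + c) t hb ht
  have h2 : Tendsto (fun n : ℕ => (((n:ℝ) + 2) / n) ^ t) atTop (nhds 1) := by
    have hq : Tendsto (fun n : ℕ => ((n:ℝ) + 2) / n) atTop (nhds 1) := by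
      have : Tendsto (fun n : ℕ => 1 + 2 / (n:ℝ)) atTop (nhds (1 + 0)) :=
        tendsto_const_nhds.add (tendsto_const_nhds.div_atTop tendsto_natCast_atTop_atTop)
      rw [add_zero] at this
      refine this.congr' ?_
      filter_upwards [Filter.eventually_gt_atTop 0] with n hn
      have hn' : (0:ℝ) < (n:ℝ) := by exact_mod_cast hn
      field_simp
    have hc : ContinuousAt (fun x : ℝ => x ^ t) 1 :=
      Real.continuousAt_rpow_const 1 t (Or.inl one_ne_zero)
    have := hc.tendsto.comp hq
    simpa [Real.one_rpow, Function.comp_def] using this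
  have := (h2.mul h1)
  rw [one_mul] at this
  refine this.congr' ?_
  filter_upwards [Filter.eventually_gt_atTop 0] with n hn
  have hn' : (0:ℝ) < (n:ℝ) := by exact_mod_cast hn
  have harg : ((n + 2 : ℕ) : ℝ) + c = 1 + c + n + 1 := by push_cast; ring
  have harg2 : ((n + 2 : ℕ) : ℝ) + c + t = 1 + c + t + n + 1 := by push_cast; ring
  have hpow : ((n + 2 : ℕ) : ℝ) ^ t = (((n:ℝ) + 2) / n) ^ t * (n:ℝ) ^ t := by
    rw [← Real.mul_rpow (by positivity) hn'.le, div_mul_cancel₀]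
    · push_cast; ring_nf
    · exact hn'.ne'
  rw [harg2, harg, hpow]
  ring


/-- The Beta function `B(x,y) = Γ(x)Γ(y)/Γ(x+y)`. -/
noncomputable def Beta (x y : ℝ) : ℝ :=
  Real.Gamma x * Real.Gamma y / Real.Gamma (x + y)

/-- The closed-form facet degree distribution of GeneSCs:
`p_k = (B(k+a, 1+(g+a)/(g−1)) / B(1+a, 1+(g+a)/(g−1))) · (g+a)/(g−1+g(1+a))`. -/
noncomputable def facetDegreeDist (g a : ℝ) (k : ℕ) : ℝ :=
  (Beta ((k : ℝ) + a) (1 + (g + a) / (g - 1)) /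
    Beta (1 + a) (1 + (g + a) / (g - 1))) * ((g + a) / (g - 1 + g * (1 + a)))

/-- For `g > 1`, `a ≥ 0` and `α = 2 + (1+a)/(g−1)`, the sequence `p_k`
is asymptotically a power law with exponent `α`: `p_k · k^α` converges, as `k → ∞`, to
the positive constant `Γ(1+(g+a)/(g−1)) / B(1+a, 1+(g+a)/(g−1)) · (g+a)/(g−1+g(1+a))`.
In particular, for `a = 0` and `g = c·s` the exponent is `α = 2 + 1/(c·s − 1)`. -/
theorem facet_degree_power_law (g a : ℝ) (hg : 1 < g) (ha : 0 ≤ a)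
    (α : ℝ) (hα : α = 2 + (1 + a) / (g - 1)) :
    (0 < Real.Gamma (1 + (g + a) / (g - 1)) / Beta (1 + a) (1 + (g + a) / (g - 1)) *
        ((g + a) / (g - 1 + g * (1 + a))) ∧
      Filter.Tendsto (fun k : ℕ => facetDegreeDist g a k * (k : ℝ) ^ α)
        Filter.atTop
        (nhds (Real.Gamma (1 + (g + a) / (g - 1)) / Beta (1 + a) (1 + (g + a) / (g - 1)) *
          ((g + a) / (g - 1 + g * (1 + a)))))) ∧
    (∀ c s : ℝ, a = 0 → g = c * s → α = 2 + 1 / (c * s - 1)) := by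
  set t : ℝ := 1 + (g + a) / (g - 1) with ht_def
  have hg1 : (0:ℝ) < g - 1 := by linarith
  have htα : α = t := by
    rw [hα, ht_def]
    field_simp
    ring
  have ht : 0 < t := by
    rw [ht_def]
    have : 0 ≤ (g + a) / (g - 1) := div_nonneg (by linarith) hg1.le
    linarith
  have h1a : (0:ℝ) < 1 + a := by linarith
  have hΓt : 0 < Real.Gamma t := Real.Gamma_pos_of_pos ht
  have hΓ1a : 0 < Real.Gamma (1 + a) := Real.Gamma_pos_of_pos h1a
  have hΓ1at : 0 < Real.Gamma (1 + a + t) := Real.Gamma_pos_of_pos (by linarith)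
  have hB : 0 < Beta (1 + a) t := by
    unfold Beta
    positivity
  have hC : 0 < (g + a) / (g - 1 + g * (1 + a)) := by
    apply div_pos (by linarith)
    nlinarith
  refine ⟨⟨mul_pos (div_pos hΓt hB) hC, ?_⟩, ?_⟩
  · set M : ℝ := Real.Gamma t / Beta (1 + a) t * ((g + a) / (g - 1 + g * (1 + a))) with hM
    have key := (tendsto_gamma_ratio' a t ha ht).mul_const M
    rw [one_mul] at key
    refine key.congr ?_
    intro k
    rw [htα, hM]
    simp only [facetDegreeDist, Beta, ht_def]
    ring
  · intro c s h0 h1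
    rw [hα, h0, h1]
    norm_num
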